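/- arXiv:1202.6019 — 2 statements merged into one kernel-verified Lean document; each statement's English description precedes it below -/
import Mathlib

section
/- Let α be a root of the irreducible polynomial f(x) = x³ + x² − 6x − 1 and K = ℚ(α), the totally real cubic field of discriminant 985, whose ring of integers is O_K = ℤ[α]. Let ξ₀ = (2 − α + 2α²)/5. Then |N_{K/ℚ}(ξ₀ − η)| ≥ 1 for every η ∈ O_K, and N_{K/ℚ}(ξ₀ − 2) = 1; in other words, the Euclidean minimum M(K, ξ₀) = inf{ |N_{K/ℚ}(ξ₀ − η)| : η ∈ O_K } equals 1 (so K is not norm-Euclidean). -/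
open NumberField

open Polynomial in
private lemma no_rat_root_aux : ∀ r : ℚ, r^3 + r^2 - 6*r - 1 ≠ 0 := by
  intro r h
  set p : ℤ[X] := X^3 + X^2 - C 6 * X - 1 with hp
  have hmonic : p.Monic := by unfold p; monicity!
  have hroot : aeval r p = 0 := by
    simp only [hp]
    simp [map_ofNat]
    linear_combination h
  obtain ⟨r', hr', hdvd⟩ := exists_integer_of_is_root_of_monic hmonic hroot
  have hc0 : p.coeff 0 = -1 := by simp [hp]
  rw [hc0] at hdvd
  have h1 : r' = 1 ∨ r' = -1 := Int.isUnit_iff.mp (isUnit_of_dvd_one (dvd_neg.mp hdvd))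
  have hr : r = (r' : ℚ) := by rw [hr']; simp [eq_intCast]
  rcases h1 with rfl | rfl <;> rw [hr] at h <;> norm_num at h

open Polynomial in
private lemma minpoly_deg_aux {K : Type*} [Field K] [NumberField K]
    (α : K) (hf : α ^ 3 + α ^ 2 - 6 * α - 1 = 0)
    (hint : IsIntegral ℚ α) : (minpoly ℚ α).natDegree = 3 := by
  set p : ℚ[X] := X^3 + X^2 - C 6 * X - 1 with hp
  have hmonic : p.Monic := by unfold p; monicity!
  have hpdeg : p.natDegree = 3 := by unfold p; compute_degree!
  have haeval : aeval α p = 0 := by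
    simp only [hp]
    simp
    linear_combination hf
  have hdvd : minpoly ℚ α ∣ p := minpoly.dvd ℚ α haeval
  obtain ⟨s, hs⟩ := hdvd
  have hq := minpoly.monic hint
  have hqne : minpoly ℚ α ≠ 0 := hq.ne_zero
  have hpne : p ≠ 0 := hmonic.ne_zero
  have hsne : s ≠ 0 := by rintro rfl; rw [mul_zero] at hs; exact hpne hs
  have hsum : (minpoly ℚ α).natDegree + s.natDegree = 3 := by
    rw [← natDegree_mul hqne hsne, ← hs, hpdeg]
  have hsmonic : s.Monic := by
    have h2 := hmonic
    rw [hs] at h2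
    exact hq.of_mul_monic_left h2
  have hd1 := minpoly.natDegree_pos hint
  have hub : (minpoly ℚ α).natDegree ≤ 3 := by omega
  interval_cases hqd : (minpoly ℚ α).natDegree
  · -- degree 1 : α rational
    exfalso
    have h1d : minpoly ℚ α = X + C ((minpoly ℚ α).coeff 0) := hq.eq_X_add_C hqd
    set c := (minpoly ℚ α).coeff 0 with hcdef
    have hmp := minpoly.aeval ℚ α
    rw [h1d] at hmp
    simp at hmp
    have hα : α = ((-c : ℚ) : K) := by push_cast; linear_combination hmp
    apply no_rat_root_aux (-c)
    have hα' : α = -(c:K) := by push_cast at hα; exact hα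
    have key : (((-c)^3 + (-c)^2 - 6*(-c) - 1 : ℚ) : K) = ((0:ℚ) : K) := by
      push_cast
      linear_combination hf - ((-(c:K))^2 + (-(c:K))*α + α^2 + (-(c:K)) + α - 6) * hα'
    exact Rat.cast_injective key
  · -- degree 2 : s linear, rational root of p
    exfalso
    have hsd : s.natDegree = 1 := by omega
    have hsX : s = X + C (s.coeff 0) := hsmonic.eq_X_add_C hsd
    have hroot : aeval (-(s.coeff 0)) p = 0 := by
      rw [hs, map_mul, hsX]
      simp
    apply no_rat_root_aux (-(s.coeff 0))
    have h3 := hroot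
    simp only [hp] at h3
    simp at h3
    linear_combination h3
  · rfl

private def Fi (a b c : ℤ) : ℤ :=
  a^3 - a^2*b - 6*a*b^2 + b^3 + 13*a^2*c + 3*a*b*c - b^2*c + 38*a*c^2 - 6*b*c^2 + c^3

private def Gi (x y z : ℤ) : ℤ :=
  8 + 56*z + 58*z^2 + 5*z^3 - 16*y - 26*y*z - 30*y*z^2 - 2*y^2 - 5*y^2*z + 5*y^3
  + 36*x + 216*x*z + 190*x*z^2 - 46*x*y + 15*x*y*z - 30*x*y^2 + 28*x^2 + 65*x^2*z
  - 5*x^2*y + 5*x^3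

private lemma FG (x y z : ℤ) : Fi (2+5*x) (4+5*y) (2+5*z) = 25 * Gi x y z := by
  simp only [Fi, Gi]; ring

private lemma Gmod5 (x y z : ℤ) :
    (Gi x y z : ZMod 5) = 0 ∨ (Gi x y z : ZMod 5) = 2 ∨ (Gi x y z : ZMod 5) = 3 := by
  have : ∀ x y z : ZMod 5,
      (8 + 56*z + 58*z^2 + 5*z^3 - 16*y - 26*y*z - 30*y*z^2 - 2*y^2 - 5*y^2*z + 5*y^3
      + 36*x + 216*x*z + 190*x*z^2 - 46*x*y + 15*x*y*z - 30*x*y^2 + 28*x^2 + 65*x^2*z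
      - 5*x^2*y + 5*x^3 = 0) ∨ (8 + 56*z + 58*z^2 + 5*z^3 - 16*y - 26*y*z - 30*y*z^2
      - 2*y^2 - 5*y^2*z + 5*y^3 + 36*x + 216*x*z + 190*x*z^2 - 46*x*y + 15*x*y*z
      - 30*x*y^2 + 28*x^2 + 65*x^2*z - 5*x^2*y + 5*x^3 = 2) ∨ (8 + 56*z + 58*z^2 + 5*z^3
      - 16*y - 26*y*z - 30*y*z^2 - 2*y^2 - 5*y^2*z + 5*y^3 + 36*x + 216*x*z + 190*x*z^2
      - 46*x*y + 15*x*y*z - 30*x*y^2 + 28*x^2 + 65*x^2*z - 5*x^2*y + 5*x^3 = 3) := by decide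
  have h := this (x : ZMod 5) (y : ZMod 5) (z : ZMod 5)
  simpa only [Gi] using by push_cast; exact h

private lemma Fdvd2 {a b c : ℤ} (h : (2:ℤ) ∣ Fi a b c) : (8:ℤ) ∣ Fi a b c := by
  have h2 : ∀ a b c : ZMod 2, a^3 - a^2*b - 6*a*b^2 + b^3 + 13*a^2*c + 3*a*b*c - b^2*c
      + 38*a*c^2 - 6*b*c^2 + c^3 = 0 → a = 0 ∧ b = 0 ∧ c = 0 := by decide
  have hc : ((Fi a b c : ℤ) : ZMod 2) = 0 := by
    exact_mod_cast (ZMod.intCast_zmod_eq_zero_iff_dvd _ 2).mpr h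
  rw [Fi] at hc; push_cast at hc
  obtain ⟨ha, hb, hcc⟩ := h2 _ _ _ hc
  obtain ⟨a', rfl⟩ := (ZMod.intCast_zmod_eq_zero_iff_dvd a 2).mp ha
  obtain ⟨b', rfl⟩ := (ZMod.intCast_zmod_eq_zero_iff_dvd b 2).mp hb
  obtain ⟨c', rfl⟩ := (ZMod.intCast_zmod_eq_zero_iff_dvd c 2).mp hcc
  exact ⟨Fi a' b' c', by simp only [Fi]; ring⟩

private lemma Fdvd3 {a b c : ℤ} (h : (3:ℤ) ∣ Fi a b c) : (27:ℤ) ∣ Fi a b c := by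
  have h2 : ∀ a b c : ZMod 3, a^3 - a^2*b - 6*a*b^2 + b^3 + 13*a^2*c + 3*a*b*c - b^2*c
      + 38*a*c^2 - 6*b*c^2 + c^3 = 0 → a = 0 ∧ b = 0 ∧ c = 0 := by decide
  have hc : ((Fi a b c : ℤ) : ZMod 3) = 0 := by
    exact_mod_cast (ZMod.intCast_zmod_eq_zero_iff_dvd _ 3).mpr h
  rw [Fi] at hc; push_cast at hc
  obtain ⟨ha, hb, hcc⟩ := h2 _ _ _ hc
  obtain ⟨a', rfl⟩ := (ZMod.intCast_zmod_eq_zero_iff_dvd a 3).mp ha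
  obtain ⟨b', rfl⟩ := (ZMod.intCast_zmod_eq_zero_iff_dvd b 3).mp hb
  obtain ⟨c', rfl⟩ := (ZMod.intCast_zmod_eq_zero_iff_dvd c 3).mp hcc
  exact ⟨Fi a' b' c', by simp only [Fi]; ring⟩

private lemma Fmain (x y z : ℤ) :
    Fi (2+5*x) (4+5*y) (2+5*z) = 0 ∨ 125 ≤ |Fi (2+5*x) (4+5*y) (2+5*z)| := by
  rw [FG]
  set g := Gi x y z with hg
  rcases eq_or_ne g 0 with h0 | h0
  · left; rw [h0]; ring
  right
  by_contra hlt
  push_neg at hlt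
  have hglt : |g| ≤ 4 := by
    rw [abs_mul] at hlt; simp at hlt; omega
  obtain ⟨hL, hR⟩ := abs_le.mp hglt
  have hmod := Gmod5 x y z
  rw [← hg] at hmod
  interval_cases g
  · revert hmod; decide
  · have : (3:ℤ) ∣ 25 * (-3 : ℤ) := by decide
    have h8 := Fdvd3 (by rw [FG, ← hg]; exact this)
    rw [FG, ← hg] at h8; omega
  · have : (2:ℤ) ∣ 25 * (-2 : ℤ) := by decide
    have h8 := Fdvd2 (by rw [FG, ← hg]; exact this)
    rw [FG, ← hg] at h8; omega
  · revert hmod; decide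
  · exact h0 rfl
  · revert hmod; decide
  · have : (2:ℤ) ∣ 25 * (2 : ℤ) := by decide
    have h8 := Fdvd2 (by rw [FG, ← hg]; exact this)
    rw [FG, ← hg] at h8; omega
  · have : (3:ℤ) ∣ 25 * (3 : ℤ) := by decide
    have h8 := Fdvd3 (by rw [FG, ← hg]; exact this)
    rw [FG, ← hg] at h8; omega
  · revert hmod; decide

private lemma norm_and_indep_aux {K : Type*} [Field K] [NumberField K]
    (α : K) (hf : α ^ 3 + α ^ 2 - 6 * α - 1 = 0)
    (hgen : Algebra.adjoin ℚ {α} = ⊤) :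
    (∀ A B C : ℚ, Algebra.norm ℚ ((A:K) + (B:K) * α + (C:K) * α^2)
      = A^3 - A^2*B - 6*A*B^2 + B^3 + 13*A^2*C + 3*A*B*C - B^2*C + 38*A*C^2 - 6*B*C^2 + C^3)
    ∧ (∀ A B C : ℚ, (A:K) + (B:K) * α + (C:K) * α^2 = 0 → C = 0) := by
  classical
  have hint : IsIntegral ℚ α := IsIntegral.of_finite ℚ α
  have hdeg : (minpoly ℚ α).natDegree = 3 := minpoly_deg_aux α hf hint
  let e : Algebra.adjoin ℚ ({α} : Set K) ≃ₐ[ℚ] K :=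
    (Subalgebra.equivOfEq _ _ hgen).trans Subalgebra.topEquiv
  let pb : PowerBasis ℚ K := (Algebra.adjoin.powerBasis hint).map e
  have hpbgen : pb.gen = α := by simp [pb, e, Algebra.adjoin.powerBasis]
  have hpbdim : pb.dim = 3 := by simp [pb, Algebra.adjoin.powerBasis, hdeg]
  let b : Module.Basis (Fin 3) ℚ K := pb.basis.reindex (finCongr hpbdim)
  have hb : ∀ i : Fin 3, b i = α ^ (i : ℕ) := by
    intro i
    simp [b, Module.Basis.reindex_apply, pb.basis_eq_pow, hpbgen]
  have hb0 : b 0 = 1 := by rw [hb 0]; norm_num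
  have hb1 : b 1 = α := by rw [hb 1]; norm_num
  have hb2 : b 2 = α^2 := by rw [hb 2]; norm_num
  have hrepr : ∀ (v : K) (c : Fin 3 → ℚ),
      v = c 0 • b 0 + c 1 • b 1 + c 2 • b 2 → ∀ i, b.repr v i = c i := by
    intro v c hv i
    subst hv
    simp only [map_add, map_smul, Module.Basis.repr_self]
    fin_cases i <;> simp [Finsupp.single_apply]
  constructor
  · intro A B C
    set x : K := (A:K) + (B:K) * α + (C:K) * α^2 with hx
    have hM : Algebra.leftMulMatrix b x =
        !![A, C, B-C; B, A+6*C, 6*B-5*C; C, B-C, A-B+7*C] := by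
      ext i j
      rw [Algebra.leftMulMatrix_eq_repr_mul]
      fin_cases j
      · refine ((hrepr (x * b 0) ![A, B, C] ?_) i).trans ?_
        · simp only [Matrix.cons_val_zero, Matrix.cons_val_one, Matrix.head_cons,
            Matrix.cons_val_two, Matrix.tail_cons, hb0, hb1, hb2, Rat.smul_def, hx]
          ring
        · fin_cases i <;> simp
      · refine ((hrepr (x * b 1) ![C, A+6*C, B-C] ?_) i).trans ?_
        · simp only [Matrix.cons_val_zero, Matrix.cons_val_one, Matrix.head_cons,
            Matrix.cons_val_two, Matrix.tail_cons, hb0, hb1, hb2, Rat.smul_def, hx]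
          push_cast
          linear_combination ((C:K)) * hf
        · fin_cases i <;> simp
      · refine ((hrepr (x * b 2) ![B-C, 6*B-5*C, A-B+7*C] ?_) i).trans ?_
        · simp only [Matrix.cons_val_zero, Matrix.cons_val_one, Matrix.head_cons,
            Matrix.cons_val_two, Matrix.tail_cons, hb0, hb1, hb2, Rat.smul_def, hx]
          push_cast
          linear_combination ((B:K) + (C:K)*(α - 1)) * hf
        · fin_cases i <;> simp
    rw [Algebra.norm_eq_matrix_det b, hM, Matrix.det_fin_three]
    simp
    ring
  · intro A B C h0
    have h2 := hrepr 0 ![A, B, C] ?_ 2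
    · rw [map_zero] at h2
      simpa using h2.symm
    · simp only [Matrix.cons_val_zero, Matrix.cons_val_one, Matrix.head_cons,
        Matrix.cons_val_two, Matrix.tail_cons, hb0, hb1, hb2, Rat.smul_def]
      rw [mul_one]; exact h0.symm

/-- For the totally real cubic field `K = ℚ(α)` of discriminant `985`, where
`α³ + α² - 6α - 1 = 0` and `O_K = ℤ[α]`, the point `ξ₀ = (2 - α + 2α²)/5` has
Euclidean minimum `M(K, ξ₀) = 1`: every `η ∈ O_K` satisfies
`|N(ξ₀ - η)| ≥ 1`, with equality for `η = 2`. -/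
theorem stmt_17 (K : Type*) [Field K] [NumberField K]
    (α : K) (hf : α ^ 3 + α ^ 2 - 6 * α - 1 = 0)
    (hgen : Algebra.adjoin ℚ {α} = ⊤)
    (hO : ∀ x : K, IsIntegral ℤ x ↔ x ∈ Algebra.adjoin ℤ {α}) :
    (∀ η ∈ Algebra.adjoin ℤ {α},
      1 ≤ |Algebra.norm ℚ ((2 - α + 2 * α ^ 2) / 5 - η)|) ∧
    Algebra.norm ℚ ((2 - α + 2 * α ^ 2) / 5 - 2) = 1 := by
  obtain ⟨hnorm, hindep⟩ := norm_and_indep_aux α hf hgen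
  have hdec : ∀ η ∈ Algebra.adjoin ℤ ({α} : Set K),
      ∃ u v w : ℤ, η = (u:K) + (v:K)*α + (w:K)*α^2 := by
    intro η hη
    induction hη using Algebra.adjoin_induction with
    | mem x hx =>
      rw [Set.mem_singleton_iff] at hx
      exact ⟨0, 1, 0, by rw [hx]; push_cast; ring⟩
    | algebraMap r => exact ⟨r, 0, 0, by rw [eq_intCast]; push_cast; ring⟩
    | add x y hx hy ihx ihy =>
      obtain ⟨u, v, w, rfl⟩ := ihx
      obtain ⟨u', v', w', rfl⟩ := ihy
      exact ⟨u + u', v + v', w + w', by push_cast; ring⟩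
    | mul x y hx hy ihx ihy =>
      obtain ⟨u, v, w, rfl⟩ := ihx
      obtain ⟨u', v', w', rfl⟩ := ihy
      refine ⟨u*u' + v*w' + w*v' - w*w', u*v' + v*u' + 6*(v*w'+w*v') - 5*w*w',
        u*w' + v*v' + w*u' - (v*w'+w*v') + 7*w*w', ?_⟩
      push_cast
      linear_combination ((v:K)*(w':K) + (w:K)*(v':K) + (w:K)*(w':K)*(α-1)) * hf
  constructor
  · intro η hη
    obtain ⟨u, v, w, rfl⟩ := hdec η hη
    set A : ℚ := 2/5 - u with hA
    set B : ℚ := -1/5 - v with hB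
    set C : ℚ := 2/5 - w with hC
    have hx : (2 - α + 2 * α ^ 2) / 5 - ((u:K) + (v:K)*α + (w:K)*α^2)
        = (A:K) + (B:K) * α + (C:K) * α^2 := by
      rw [hA, hB, hC]; push_cast; ring
    rw [hx, hnorm A B C]
    set N : ℤ := Fi (2+5*(-u)) (4+5*(-1-v)) (2+5*(-w)) with hN
    have hkey : A^3 - A^2*B - 6*A*B^2 + B^3 + 13*A^2*C + 3*A*B*C - B^2*C + 38*A*C^2
        - 6*B*C^2 + C^3 = (N:ℚ)/125 := by
      rw [hN, hA, hB, hC, Fi]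
      push_cast
      ring
    rw [hkey]
    rcases Fmain (-u) (-1-v) (-w) with h0 | h125
    · exfalso
      rw [← hN] at h0
      have hnz : (A:K) + (B:K) * α + (C:K) * α^2 = 0 := by
        have : Algebra.norm ℚ ((A:K) + (B:K) * α + (C:K) * α^2) = 0 := by
          rw [hnorm A B C, hkey, h0]; norm_num
        exact Algebra.norm_eq_zero_iff.mp this
      have hC0 : C = 0 := hindep A B C hnz
      rw [hC] at hC0
      have : (5:ℚ) * w = 2 := by linarith
      have : (5:ℤ) * w = 2 := by exact_mod_cast this
      omega
    · rw [← hN] at h125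
      rw [abs_div]
      rw [le_div_iff₀ (by norm_num : (0:ℚ) < |125|)]
      have : (125:ℚ) ≤ |(N:ℚ)| := by
        rw [← Int.cast_abs]
        exact_mod_cast h125
      rw [abs_of_pos (by norm_num : (0:ℚ) < 125)] at *
      linarith
  · have hx : (2 - α + 2 * α ^ 2) / 5 - 2
        = ((-8/5 : ℚ):K) + ((-1/5 : ℚ):K) * α + ((2/5 : ℚ):K) * α^2 := by
      push_cast; ring
    rw [hx, hnorm]
    norm_num
end

section
/- Let ℓ ≥ 2 be an even integer such that m = ℓ³ + 1 is squarefree, let α be the real cube root of m (so α³ = ℓ³ + 1), and let K = ℚ(α), a pure cubic field; put ξ = (1 + α + α²)/2. If ℓ ≡ 2 (mod 4), then θ = ℓ²/4 + 1/2 + (ℓ/4)α − (1/2)α² satisfies ξ − θ ∈ ℤ[α] and |N_{K/ℚ}(θ)| = (18ℓ⁴ − 9ℓ³ + 12ℓ² + 12ℓ)/64; if ℓ ≡ 0 (mod 4), then θ = ℓ²/4 + ℓ/2 + 1/2 + (ℓ/4 − 1/2)α − (1/2)α² satisfies ξ − θ ∈ ℤ[α] and |N_{K/ℚ}(θ)|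 = (18ℓ⁴ − 9ℓ³ + 30ℓ² + 24ℓ − 32)/64. Consequently inf{ |N_{K/ℚ}(ξ − η)| : η ∈ ℤ[α] } is at most the corresponding value. -/
open NumberField

open Polynomial


private theorem stmt19_norm_formula (K : Type*) [Field K] [NumberField K] (m : ℤ) (hm9 : 9 ≤ m)
    (hmsf : Squarefree m) (α : K) (hα : α ^ 3 = (m : K))
    (hgen : Algebra.adjoin ℚ {α} = ⊤) (a b c : ℚ) :
    Algebra.norm ℚ (algebraMap ℚ K a + algebraMap ℚ K b * α + algebraMap ℚ K c * α ^ 2)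
      = a^3 + b^3*(m:ℚ) + c^3*(m:ℚ)^2 - 3*a*b*c*(m:ℚ) := by
  have hint : IsIntegral ℚ α := IsIntegral.of_finite ℚ α
  have hcube : ∀ q : ℚ, q ^ 3 ≠ (m : ℚ) := by
    intro q hq
    have hqint : IsIntegral ℤ q := ⟨X ^ 3 - C (m : ℤ), monic_X_pow_sub_C _ (by norm_num), by
      rw [eval₂_sub, eval₂_pow, eval₂_X, eval₂_C, hq]; simp⟩
    obtain ⟨n, hn⟩ := IsIntegrallyClosed.isIntegral_iff.mp hqint
    rw [← hn] at hq
    simp only [algebraMap_int_eq, eq_intCast] at hq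
    have hn3 : n ^ 3 = m := by exact_mod_cast hq
    have hunit : IsUnit n := hmsf n (by rw [← hn3]; exact ⟨n, by ring⟩)
    rcases Int.isUnit_iff.mp hunit with h | h <;> subst h <;> norm_num at hn3 <;> omega
  have hirr : Irreducible (X ^ 3 - C (m : ℚ)) :=
    X_pow_sub_C_irreducible_of_prime Nat.prime_three hcube
  have hmin : minpoly ℚ α = X ^ 3 - C (m : ℚ) := by
    refine (minpoly.eq_of_irreducible_of_monic hirr ?_ (monic_X_pow_sub_C _ (by norm_num))).symm
    simp [hα]
  let pb : PowerBasis ℚ K :=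
    (Algebra.adjoin.powerBasis hint).map
      ((Subalgebra.equivOfEq _ ⊤ hgen).trans Subalgebra.topEquiv)
  have hpbgen : pb.gen = α := by
    simp [pb, PowerBasis.map_gen, Algebra.adjoin.powerBasis_gen]
  have hdim : pb.dim = 3 := by
    show (Algebra.adjoin.powerBasis hint).dim = 3
    rw [Algebra.adjoin.powerBasis_dim, hmin]
    compute_degree!
  let bs : Module.Basis (Fin 3) ℚ K := pb.basis.reindex (finCongr hdim)
  have hbs : ∀ i : Fin 3, bs i = α ^ (i : ℕ) := by
    intro i
    simp [bs, Module.Basis.reindex_apply, PowerBasis.basis_eq_pow, hpbgen]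
  have hrepr : ∀ (v : Fin 3 → ℚ) (i : Fin 3), bs.repr (∑ j, v j • bs j) i = v i := by
    intro v i
    rw [← bs.equivFun_symm_apply, ← Module.Basis.equivFun_apply, LinearEquiv.apply_symm_apply]
  set θ : K := algebraMap ℚ K a + algebraMap ℚ K b * α + algebraMap ℚ K c * α ^ 2 with hθ
  have hαm : (α : K) ^ 3 = algebraMap ℚ K (m : ℚ) := by rw [hα]; simp
  have hM : Algebra.leftMulMatrix bs θ =
      Matrix.of ![![a, c * m, b * m], ![b, a, c * m], ![c, b, a]] := by
    ext i j
    rw [Algebra.leftMulMatrix_eq_repr_mul]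
    fin_cases j <;> simp only [Fin.zero_eta, Fin.mk_one, Fin.reduceFinMk, Fin.isValue]
    · have : θ * bs 0 = ∑ k, (![a, b, c]) k • bs k := by
        simp only [hbs, Fin.sum_univ_three, Algebra.smul_def, Matrix.cons_val_zero,
          Matrix.cons_val_one, Matrix.head_cons, Matrix.cons_val_two, Matrix.tail_cons,
          Fin.isValue, Fin.val_zero, Fin.val_one, Fin.val_two, pow_zero, pow_one]
        ring
      rw [this, hrepr]
      fin_cases i <;> simp
    · have : θ * bs 1 = ∑ k, (![c * m, a, b]) k • bs k := by
        simp only [hbs, Fin.sum_univ_three, Algebra.smul_def, Matrix.cons_val_zero,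
          Matrix.cons_val_one, Matrix.head_cons, Matrix.cons_val_two, Matrix.tail_cons,
          Fin.isValue, Fin.val_zero, Fin.val_one, Fin.val_two, pow_zero, pow_one, map_mul]
        linear_combination (algebraMap ℚ K c) * hαm
      rw [this, hrepr]
      fin_cases i <;> simp
    · have : θ * bs 2 = ∑ k, (![b * m, c * m, a]) k • bs k := by
        simp only [hbs, Fin.sum_univ_three, Algebra.smul_def, Matrix.cons_val_zero,
          Matrix.cons_val_one, Matrix.head_cons, Matrix.cons_val_two, Matrix.tail_cons,
          Fin.isValue, Fin.val_zero, Fin.val_one, Fin.val_two, pow_zero, pow_one, map_mul]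
        linear_combination (algebraMap ℚ K b + algebraMap ℚ K c * α) * hαm
      rw [this, hrepr]
      fin_cases i <;> simp
  rw [Algebra.norm_eq_matrix_det bs, hM]
  rw [Matrix.det_fin_three]
  simp [Matrix.of_apply]
  ring


/-- Upper bounds for the Euclidean minimum of `ξ = (1 + α + α²)/2` in the pure
cubic field `K = ℚ(α)`, `α³ = m = ℓ³ + 1` with `ℓ ≥ 2` even and `m` squarefree:
for `ℓ ≡ 2 (mod 4)` the element `θ = ℓ²/4 + 1/2 + (ℓ/4)α - (1/2)α²` is congruent
to `ξ` modulo `ℤ[α]` and has `|N(θ)| = (18ℓ⁴ - 9ℓ³ + 12ℓ² + 12ℓ)/64`; for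
`ℓ ≡ 0 (mod 4)` the element `θ = ℓ²/4 + ℓ/2 + 1/2 + (ℓ/4 - 1/2)α - (1/2)α²` is
congruent to `ξ` modulo `ℤ[α]` and has
`|N(θ)| = (18ℓ⁴ - 9ℓ³ + 30ℓ² + 24ℓ - 32)/64`; hence in each case
`inf { |N(ξ - η)| : η ∈ ℤ[α] }` is at most the corresponding value. -/
theorem stmt_19 (K : Type*) [Field K] [NumberField K]
    (ℓ : ℤ) (hℓ2 : 2 ≤ ℓ) (hℓeven : Even ℓ)
    (hm : Squarefree (ℓ ^ 3 + 1))
    (α : K) (hα : α ^ 3 = ((ℓ ^ 3 + 1 : ℤ) : K))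
    (hgen : Algebra.adjoin ℚ {α} = ⊤) :
    (ℓ % 4 = 2 →
      ((1 + α + α ^ 2) / 2 -
          ((ℓ : K) ^ 2 / 4 + 1 / 2 + ((ℓ : K) / 4) * α - α ^ 2 / 2)
            ∈ Algebra.adjoin ℤ {α}) ∧
      |Algebra.norm ℚ ((ℓ : K) ^ 2 / 4 + 1 / 2 + ((ℓ : K) / 4) * α - α ^ 2 / 2)| =
        ((18 * ℓ ^ 4 - 9 * ℓ ^ 3 + 12 * ℓ ^ 2 + 12 * ℓ : ℤ) : ℚ) / 64 ∧
      sInf {x : ℝ | ∃ η ∈ Algebra.adjoin ℤ {α},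
          x = |((Algebra.norm ℚ ((1 + α + α ^ 2) / 2 - η) : ℚ) : ℝ)|} ≤
        (((18 * ℓ ^ 4 - 9 * ℓ ^ 3 + 12 * ℓ ^ 2 + 12 * ℓ : ℤ) : ℝ)) / 64) ∧
    (ℓ % 4 = 0 →
      ((1 + α + α ^ 2) / 2 -
          ((ℓ : K) ^ 2 / 4 + (ℓ : K) / 2 + 1 / 2 + ((ℓ : K) / 4 - 1 / 2) * α - α ^ 2 / 2)
            ∈ Algebra.adjoin ℤ {α}) ∧
      |Algebra.norm ℚ
          ((ℓ : K) ^ 2 / 4 + (ℓ : K) / 2 + 1 / 2 + ((ℓ : K) / 4 - 1 / 2) * α - α ^ 2 / 2)| =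
        ((18 * ℓ ^ 4 - 9 * ℓ ^ 3 + 30 * ℓ ^ 2 + 24 * ℓ - 32 : ℤ) : ℚ) / 64 ∧
      sInf {x : ℝ | ∃ η ∈ Algebra.adjoin ℤ {α},
          x = |((Algebra.norm ℚ ((1 + α + α ^ 2) / 2 - η) : ℚ) : ℝ)|} ≤
        (((18 * ℓ ^ 4 - 9 * ℓ ^ 3 + 30 * ℓ ^ 2 + 24 * ℓ - 32 : ℤ) : ℝ)) / 64) := by
  have hm9 : (9 : ℤ) ≤ ℓ ^ 3 + 1 := by nlinarith [mul_nonneg (sub_nonneg.mpr hℓ2) (sq_nonneg (ℓ + 1)), sub_nonneg.mpr hℓ2]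
  have hnf := stmt19_norm_formula K (ℓ ^ 3 + 1) hm9 hm α hα hgen
  have hαmem : α ∈ Algebra.adjoin ℤ {α} := Algebra.subset_adjoin rfl
  have hbdd : BddBelow {x : ℝ | ∃ η ∈ Algebra.adjoin ℤ {α},
      x = |((Algebra.norm ℚ ((1 + α + α ^ 2) / 2 - η) : ℚ) : ℝ)|} := by
    refine ⟨0, ?_⟩
    rintro x ⟨η, hη, rfl⟩
    positivity
  constructor
  · intro h4
    obtain ⟨k, hk⟩ : ∃ k, ℓ = 4 * k + 2 := ⟨ℓ / 4, by omega⟩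
    have hmem : (1 + α + α ^ 2) / 2 -
        ((ℓ : K) ^ 2 / 4 + 1 / 2 + ((ℓ : K) / 4) * α - α ^ 2 / 2) ∈ Algebra.adjoin ℤ {α} := by
      have he : (1 + α + α ^ 2) / 2 -
          ((ℓ : K) ^ 2 / 4 + 1 / 2 + ((ℓ : K) / 4) * α - α ^ 2 / 2)
          = algebraMap ℤ K (-(4 * k ^ 2 + 4 * k + 1)) + algebraMap ℤ K (-k) * α + α ^ 2 := by
        rw [hk]; push_cast [eq_intCast]; ring
      rw [he]
      exact Subalgebra.add_mem _ (Subalgebra.add_mem _ (Subalgebra.algebraMap_mem _ _)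
        (Subalgebra.mul_mem _ (Subalgebra.algebraMap_mem _ _) hαmem))
        (Subalgebra.pow_mem _ hαmem 2)
    have hnorm : |Algebra.norm ℚ ((ℓ : K) ^ 2 / 4 + 1 / 2 + ((ℓ : K) / 4) * α - α ^ 2 / 2)| =
        ((18 * ℓ ^ 4 - 9 * ℓ ^ 3 + 12 * ℓ ^ 2 + 12 * ℓ : ℤ) : ℚ) / 64 := by
      have hform : ((ℓ : K) ^ 2 / 4 + 1 / 2 + ((ℓ : K) / 4) * α - α ^ 2 / 2)
          = algebraMap ℚ K ((ℓ : ℚ) ^ 2 / 4 + 1 / 2) + algebraMap ℚ K ((ℓ : ℚ) / 4) * α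
            + algebraMap ℚ K (-(1 / 2)) * α ^ 2 := by
        push_cast [map_add, map_div₀, map_pow, map_intCast, map_one, map_ofNat, map_neg]
        ring
      rw [hform, hnf]
      have hval : ((ℓ : ℚ) ^ 2 / 4 + 1 / 2) ^ 3 + ((ℓ : ℚ) / 4) ^ 3 * ((ℓ ^ 3 + 1 : ℤ) : ℚ)
          + (-(1 / 2)) ^ 3 * ((ℓ ^ 3 + 1 : ℤ) : ℚ) ^ 2
          - 3 * ((ℓ : ℚ) ^ 2 / 4 + 1 / 2) * ((ℓ : ℚ) / 4) * (-(1 / 2)) * ((ℓ ^ 3 + 1 : ℤ) : ℚ)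
          = ((18 * ℓ ^ 4 - 9 * ℓ ^ 3 + 12 * ℓ ^ 2 + 12 * ℓ : ℤ) : ℚ) / 64 := by
        push_cast; ring
      rw [hval]
      have hpos : (0 : ℤ) ≤ 18 * ℓ ^ 4 - 9 * ℓ ^ 3 + 12 * ℓ ^ 2 + 12 * ℓ := by nlinarith
      exact abs_of_nonneg (div_nonneg (by exact_mod_cast hpos) (by norm_num))
    refine ⟨hmem, hnorm, ?_⟩
    have hx : |((Algebra.norm ℚ
        ((ℓ : K) ^ 2 / 4 + 1 / 2 + ((ℓ : K) / 4) * α - α ^ 2 / 2) : ℚ) : ℝ)|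
        ∈ {x : ℝ | ∃ η ∈ Algebra.adjoin ℤ {α},
          x = |((Algebra.norm ℚ ((1 + α + α ^ 2) / 2 - η) : ℚ) : ℝ)|} := by
      refine ⟨(1 + α + α ^ 2) / 2 -
        ((ℓ : K) ^ 2 / 4 + 1 / 2 + ((ℓ : K) / 4) * α - α ^ 2 / 2), hmem, ?_⟩
      rw [show (1 + α + α ^ 2) / 2 - ((1 + α + α ^ 2) / 2 -
        ((ℓ : K) ^ 2 / 4 + 1 / 2 + ((ℓ : K) / 4) * α - α ^ 2 / 2))
        = ((ℓ : K) ^ 2 / 4 + 1 / 2 + ((ℓ : K) / 4) * α - α ^ 2 / 2) from by ring]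
    refine le_trans (csInf_le hbdd hx) (le_of_eq ?_)
    rw [← Rat.cast_abs, hnorm]
    push_cast
    ring
  · intro h4
    obtain ⟨k, hk⟩ : ∃ k, ℓ = 4 * k := ⟨ℓ / 4, by omega⟩
    have hmem : (1 + α + α ^ 2) / 2 -
        ((ℓ : K) ^ 2 / 4 + (ℓ : K) / 2 + 1 / 2 + ((ℓ : K) / 4 - 1 / 2) * α - α ^ 2 / 2)
          ∈ Algebra.adjoin ℤ {α} := by
      have he : (1 + α + α ^ 2) / 2 -
          ((ℓ : K) ^ 2 / 4 + (ℓ : K) / 2 + 1 / 2 + ((ℓ : K) / 4 - 1 / 2) * α - α ^ 2 / 2)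
          = algebraMap ℤ K (-(4 * k ^ 2 + 2 * k)) + algebraMap ℤ K (1 - k) * α + α ^ 2 := by
        rw [hk]; push_cast [eq_intCast]; ring
      rw [he]
      exact Subalgebra.add_mem _ (Subalgebra.add_mem _ (Subalgebra.algebraMap_mem _ _)
        (Subalgebra.mul_mem _ (Subalgebra.algebraMap_mem _ _) hαmem))
        (Subalgebra.pow_mem _ hαmem 2)
    have hnorm : |Algebra.norm ℚ
        ((ℓ : K) ^ 2 / 4 + (ℓ : K) / 2 + 1 / 2 + ((ℓ : K) / 4 - 1 / 2) * α - α ^ 2 / 2)| =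
        ((18 * ℓ ^ 4 - 9 * ℓ ^ 3 + 30 * ℓ ^ 2 + 24 * ℓ - 32 : ℤ) : ℚ) / 64 := by
      have hform : ((ℓ : K) ^ 2 / 4 + (ℓ : K) / 2 + 1 / 2 + ((ℓ : K) / 4 - 1 / 2) * α - α ^ 2 / 2)
          = algebraMap ℚ K ((ℓ : ℚ) ^ 2 / 4 + (ℓ : ℚ) / 2 + 1 / 2)
            + algebraMap ℚ K ((ℓ : ℚ) / 4 - 1 / 2) * α
            + algebraMap ℚ K (-(1 / 2)) * α ^ 2 := by
        push_cast [map_add, map_sub, map_div₀, map_pow, map_intCast, map_one, map_ofNat, map_neg]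
        ring
      rw [hform, hnf]
      have hval : ((ℓ : ℚ) ^ 2 / 4 + (ℓ : ℚ) / 2 + 1 / 2) ^ 3
          + ((ℓ : ℚ) / 4 - 1 / 2) ^ 3 * ((ℓ ^ 3 + 1 : ℤ) : ℚ)
          + (-(1 / 2)) ^ 3 * ((ℓ ^ 3 + 1 : ℤ) : ℚ) ^ 2
          - 3 * ((ℓ : ℚ) ^ 2 / 4 + (ℓ : ℚ) / 2 + 1 / 2) * ((ℓ : ℚ) / 4 - 1 / 2) * (-(1 / 2))
            * ((ℓ ^ 3 + 1 : ℤ) : ℚ)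
          = ((18 * ℓ ^ 4 - 9 * ℓ ^ 3 + 30 * ℓ ^ 2 + 24 * ℓ - 32 : ℤ) : ℚ) / 64 := by
        push_cast; ring
      rw [hval]
      have hpos : (0 : ℤ) ≤ 18 * ℓ ^ 4 - 9 * ℓ ^ 3 + 30 * ℓ ^ 2 + 24 * ℓ - 32 := by nlinarith
      exact abs_of_nonneg (div_nonneg (by exact_mod_cast hpos) (by norm_num))
    refine ⟨hmem, hnorm, ?_⟩
    have hx : |((Algebra.norm ℚ
        ((ℓ : K) ^ 2 / 4 + (ℓ : K) / 2 + 1 / 2 + ((ℓ : K) / 4 - 1 / 2) * α - α ^ 2 / 2) : ℚ) : ℝ)|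
        ∈ {x : ℝ | ∃ η ∈ Algebra.adjoin ℤ {α},
          x = |((Algebra.norm ℚ ((1 + α + α ^ 2) / 2 - η) : ℚ) : ℝ)|} := by
      refine ⟨(1 + α + α ^ 2) / 2 -
        ((ℓ : K) ^ 2 / 4 + (ℓ : K) / 2 + 1 / 2 + ((ℓ : K) / 4 - 1 / 2) * α - α ^ 2 / 2),
        hmem, ?_⟩
      rw [show (1 + α + α ^ 2) / 2 - ((1 + α + α ^ 2) / 2 -
        ((ℓ : K) ^ 2 / 4 + (ℓ : K) / 2 + 1 / 2 + ((ℓ : K) / 4 - 1 / 2) * α - α ^ 2 / 2))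
        = ((ℓ : K) ^ 2 / 4 + (ℓ : K) / 2 + 1 / 2 + ((ℓ : K) / 4 - 1 / 2) * α - α ^ 2 / 2)
        from by ring]
    refine le_trans (csInf_le hbdd hx) (le_of_eq ?_)
    rw [← Rat.cast_abs, hnorm]
    push_cast
    ring
end
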